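/- Let G be a finite simple graph with surplus(G) ≥ 1, and let Z be a nonempty independent set of G with |N(Z)| = |Z| + 1. Then LP(G − (Z ∪ N(Z))) ≥ LP(G) − |N(Z)| + 1/2. -/

import Mathlib

open scoped Classical

/-- A fractional vertex cover of `G`. -/
def IsFVC {V : Type} (G : SimpleGraph V) (x : V → ℝ) : Prop :=
  (∀ v, 0 ≤ x v ∧ x v ≤ 1) ∧ ∀ ⦃u v⦄, G.Adj u v → 1 ≤ x u + x v

/-- The weight of a fractional vertex cover. -/
noncomputable def fvcWeight {V : Type} [Fintype V] (x : V → ℝ) : ℝ := ∑ v, x v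

/-- `LP(G)`: the minimum weight of a fractional vertex cover of `G`. -/
noncomputable def LPopt {V : Type} [Fintype V] (G : SimpleGraph V) : ℝ :=
  sInf {w : ℝ | ∃ x : V → ℝ, IsFVC G x ∧ w = fvcWeight x}

/-- A matching of `G`: a set of pairwise vertex-disjoint edges of `G`. -/
def IsMatchingSet {V : Type} (G : SimpleGraph V) (M : Finset (Sym2 V)) : Prop :=
  (∀ e ∈ M, e ∈ G.edgeSet) ∧ ∀ e ∈ M, ∀ f ∈ M, e ≠ f → ∀ v : V, v ∈ e → v ∉ f

/-- `MM(G)`: the maximum size of a matching of `G`. -/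
noncomputable def MMnum {V : Type} (G : SimpleGraph V) : ℕ :=
  sSup {n : ℕ | ∃ M : Finset (Sym2 V), IsMatchingSet G M ∧ M.card = n}

/-- `OPT(G)`: the minimum size of a vertex cover of `G`. -/
noncomputable def VCnum {V : Type} (G : SimpleGraph V) : ℕ :=
  sInf {n : ℕ | ∃ S : Finset V, (∀ ⦃u v⦄, G.Adj u v → u ∈ S ∨ v ∈ S) ∧ S.card = n}

/-- `N(X)`: the set of vertices outside `X` having a neighbour in `X`. -/
def nbhd {V : Type} (G : SimpleGraph V) (X : Set V) : Set V :=
  {v | v ∉ X ∧ ∃ u ∈ X, G.Adj u v}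

/-- `X` is an independent set in `G`. -/
def IndepSet {V : Type} (G : SimpleGraph V) (X : Set V) : Prop :=
  ∀ u ∈ X, ∀ v ∈ X, ¬ G.Adj u v

/-- `surplus(G) ≥ s`: every nonempty independent set `X` satisfies `|N(X)| ≥ |X| + s`. -/
def SurplusGE {V : Type} (G : SimpleGraph V) (s : ℕ) : Prop :=
  ∀ X : Set V, X.Nonempty → IndepSet G X → X.ncard + s ≤ (nbhd G X).ncard

/-- The matching `M` saturates the vertex `v`. -/
def Saturates {V : Type} (M : Finset (Sym2 V)) (v : V) : Prop := ∃ e ∈ M, v ∈ e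

/-- `O(G)`: vertices left unsaturated by some maximum matching of `G`. -/
def OSet {V : Type} (G : SimpleGraph V) : Set V :=
  {v | ∃ M : Finset (Sym2 V), IsMatchingSet G M ∧ M.card = MMnum G ∧ ¬ Saturates M v}

/-- `I(G)`: vertices outside `O(G)` having a neighbour in `O(G)`. -/
def ISet {V : Type} (G : SimpleGraph V) : Set V := nbhd G (OSet G)

/-- `P(G)`: the remaining vertices. -/
def GEPSet {V : Type} (G : SimpleGraph V) : Set V := (OSet G ∪ ISet G)ᶜ

set_option maxHeartbeats 4000000 in
/-- If `surplus(G) ≥ 1` and `Z` is a nonempty independent set with surplus one,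
then `LP(G − (Z ∪ N(Z))) ≥ LP(G) − |N(Z)| + 1/2`. -/
theorem lp_after_removing_surplus_one_set {V : Type} [Fintype V] (G : SimpleGraph V)
    (hsur : SurplusGE G 1) (Z : Set V) (hZne : Z.Nonempty) (hZind : IndepSet G Z)
    (hZsur : (nbhd G Z).ncard = Z.ncard + 1) :
    LPopt G - ((nbhd G Z).ncard : ℝ) + 1 / 2 ≤
      LPopt (G.induce ((Z ∪ nbhd G Z)ᶜ)) := by
  classical
  set S : Set V := Z ∪ nbhd G Z with hSdef
  set R : Set V := Sᶜ with hRdef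
  have hZnotR : ∀ v ∈ Z, v ∉ R := fun v hv hvR => hvR (Or.inl hv)
  have hNnotR : ∀ v ∈ nbhd G Z, v ∉ R := fun v hv hvR => hvR (Or.inr hv)
  have hRnoZadj : ∀ v ∈ R, ∀ u ∈ Z, ¬ G.Adj u v := by
    intro v hv u hu hadj
    exact hNnotR v ⟨fun hvZ => hZnotR v hvZ hv, u, hu, hadj⟩ hv
  have hRmem : ∀ v, v ∈ R ↔ (v ∉ Z ∧ v ∉ nbhd G Z) := by
    intro v
    constructor
    · intro hv; exact ⟨fun h => hZnotR v h hv, fun h => hNnotR v h hv⟩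
    · rintro ⟨h1, h2⟩ (h | h) <;> [exact h1 h; exact h2 h]
  -- cast of |S|
  have hdisj : Disjoint Z (nbhd G Z) := Set.disjoint_left.mpr fun a ha ha' => ha'.1 ha
  have hScard : S.ncard = Z.ncard + (nbhd G Z).ncard :=
    Set.ncard_union_eq hdisj (Set.toFinite _) (Set.toFinite _)
  have hScardR : (S.ncard : ℝ) * 2⁻¹ = ((nbhd G Z).ncard : ℝ) - 1/2 := by
    rw [hScard, hZsur]; push_cast; ring
  rw [show LPopt (G.induce R) =
      sInf {w : ℝ | ∃ x : ↥R → ℝ, IsFVC (G.induce R) x ∧ w = fvcWeight x} from rfl]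
  apply le_csInf
  · refine ⟨fvcWeight (fun _ : ↥R => (1 : ℝ)), fun _ => 1, ⟨fun v => ⟨zero_le_one, le_rfl⟩,
      fun u v _ => by norm_num⟩, rfl⟩
  rintro w ⟨y, hy, rfl⟩
  -- the extended cover
  set bad : ↥R → Prop := fun v => y v < 1/2 ∨ ∃ u : ↥R, G.Adj ↑v ↑u ∧ y u < 1/2 with hbad
  set x : V → ℝ := fun v => if h : v ∈ R then (if bad ⟨v, h⟩ then 1/2 else y ⟨v, h⟩) else 1/2
    with hxdef
  have hxv : ∀ v : ↥R, x ↑v = if bad v then 1/2 else y v := by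
    intro v
    simp only [hxdef, dif_pos v.2]
  have hxhalf : ∀ v, (1:ℝ)/2 ≤ x v := by
    intro v
    by_cases h : v ∈ R
    · simp only [hxdef]; rw [dif_pos h]
      by_cases hb : bad ⟨v, h⟩
      · rw [if_pos hb]
      · rw [if_neg hb]
        have : ¬ y ⟨v, h⟩ < 1/2 := fun hc => hb (Or.inl hc)
        linarith [not_lt.mp this]
    · simp only [hxdef]; rw [dif_neg h]
  have hxle1 : ∀ v, x v ≤ 1 := by
    intro v
    by_cases h : v ∈ R
    · simp only [hxdef]; rw [dif_pos h]
      by_cases hb : bad ⟨v, h⟩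
      · rw [if_pos hb]; norm_num
      · rw [if_neg hb]; exact (hy.1 _).2
    · simp only [hxdef]; rw [dif_neg h]; norm_num
  have hxFVC : IsFVC G x := by
    refine ⟨fun v => ⟨by linarith [hxhalf v], hxle1 v⟩, fun u v _ => ?_⟩
    linarith [hxhalf u, hxhalf v]
  have hbdd : BddBelow {w : ℝ | ∃ x : V → ℝ, IsFVC G x ∧ w = fvcWeight x} := by
    refine ⟨0, ?_⟩
    rintro w ⟨x', hx', rfl⟩
    exact Finset.sum_nonneg fun v _ => (hx'.1 v).1
  have h1 : LPopt G ≤ fvcWeight x := csInf_le hbdd ⟨x, hxFVC, rfl⟩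
  -- split the weight of x
  have hsplit : fvcWeight x
      = (S.ncard : ℝ) * 2⁻¹ + ∑ v : ↥R, (if bad v then 1/2 else y v) := by
    rw [fvcWeight, ← Finset.sum_add_sum_compl S.toFinset x]
    congr 1
    · have hconst : ∀ v ∈ S.toFinset, x v = (1:ℝ)/2 := by
        intro v hv
        have hvS : v ∈ S := Set.mem_toFinset.mp hv
        have : v ∉ R := fun hvR => hvR hvS
        simp only [hxdef]; exact dif_neg this
      rw [Finset.sum_congr rfl hconst, Finset.sum_const,
        nsmul_eq_mul, Set.ncard_eq_toFinset_card' S, one_div]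
    · have hc : S.toFinsetᶜ = R.toFinset := by
        ext v
        rw [Finset.mem_compl, Set.mem_toFinset, Set.mem_toFinset, hRdef, Set.mem_compl_iff]
      have e : ∑ v ∈ R.toFinset, x v = ∑ v : ↥R, x ↑v :=
        Finset.sum_subtype _ (fun v => Set.mem_toFinset) x
      rw [hc, e]
      exact Finset.sum_congr rfl fun v _ => hxv v
  -- the Hall family
  set B0 : Finset ↥R := Finset.univ.filter (fun v => y v < 1/2) with hB0
  set U : Finset ↥R := Finset.univ.filter
      (fun v => ¬ y v < 1/2 ∧ ∃ u : ↥R, G.Adj ↑v ↑u ∧ y u < 1/2) with hU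
  have hnoB0adj : ∀ a b : ↥R, y a < 1/2 → y b < 1/2 → ¬ G.Adj ↑a ↑b := by
    intro a b ha hb hadj
    have : (G.induce R).Adj a b := by
      simp only [SimpleGraph.induce, SimpleGraph.comap_adj]
      exact hadj
    have := hy.2 this
    linarith
  set t : {v : ↥R // y v < 1/2} → Finset ↥R :=
    fun v => U.filter (fun u => G.Adj ↑↑v ↑u) with ht
  have hHall : ∀ s : Finset {v : ↥R // y v < 1/2}, s.card ≤ (s.biUnion t).card := by
    intro s
    rcases s.eq_empty_or_nonempty with rfl | hsne
    · simp
    set sV : Finset V := s.image (fun v => (↑↑v : V)) with hsV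
    have hinj : Function.Injective (fun v : {v : ↥R // y v < 1/2} => (↑↑v : V)) := by
      intro a b hab
      exact Subtype.ext (Subtype.ext hab)
    have hsVcard : sV.card = s.card := Finset.card_image_of_injective _ hinj
    have hsVR : ∀ v ∈ sV, v ∈ R := by
      intro v hv
      obtain ⟨a, _, rfl⟩ := Finset.mem_image.mp hv
      exact (↑a : ↥R).2
    have hsVlt : ∀ v (hv : v ∈ sV), ∃ a : {v : ↥R // y v < 1/2}, a ∈ s ∧ (↑↑a : V) = v := by
      intro v hv
      obtain ⟨a, ha, rfl⟩ := Finset.mem_image.mp hv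
      exact ⟨a, ha, rfl⟩
    set X : Set V := Z ∪ ↑sV with hX
    have hXne : X.Nonempty := hZne.mono Set.subset_union_left
    have hXind : IndepSet G X := by
      rintro u (hu | hu) v (hv | hv) hadj
      · exact hZind u hu v hv hadj
      · exact hRnoZadj v (hsVR v hv) u hu hadj
      · exact hRnoZadj u (hsVR u hu) v hv hadj.symm
      · obtain ⟨a, _, rfl⟩ := hsVlt u hu
        obtain ⟨b, _, rfl⟩ := hsVlt v hv
        exact hnoB0adj _ _ a.2 b.2 hadj
    have hsurX := hsur X hXne hXind
    have hXcard : X.ncard = Z.ncard + s.card := by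
      rw [hX, Set.ncard_union_eq ?_ (Set.toFinite _) (Set.toFinite _),
        Set.ncard_coe_finset, hsVcard]
      exact Set.disjoint_left.mpr fun a ha ha' => hZnotR a ha (hsVR a ha')
    have hsub : nbhd G X ⊆ nbhd G Z ∪ ↑((s.biUnion t).image (fun u : ↥R => (↑u : V))) := by
      rintro w ⟨hwX, u, hu, hadj⟩
      have hwZ : w ∉ Z := fun h => hwX (Or.inl h)
      rcases hu with hu | hu
      · exact Or.inl ⟨hwZ, u, hu, hadj⟩
      · obtain ⟨a, has, rfl⟩ := hsVlt u hu
        by_cases hwN : w ∈ nbhd G Z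
        · exact Or.inl hwN
        · have hwR : w ∈ R := (hRmem w).mpr ⟨hwZ, hwN⟩
          have hwhalf : ¬ y ⟨w, hwR⟩ < 1/2 := by
            intro hc
            exact hnoB0adj _ ⟨w, hwR⟩ a.2 hc hadj
          have hwU : (⟨w, hwR⟩ : ↥R) ∈ U := by
            rw [hU, Finset.mem_filter]
            exact ⟨Finset.mem_univ _, hwhalf, ↑a, hadj.symm, a.2⟩
          refine Or.inr ?_
          rw [Finset.coe_image]
          refine ⟨⟨w, hwR⟩, ?_, rfl⟩
          rw [Finset.coe_biUnion]
          refine Set.mem_biUnion has ?_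
          rw [ht, Finset.mem_coe, Finset.mem_filter]
          exact ⟨hwU, hadj⟩
    have hcard2 : (nbhd G X).ncard ≤ (nbhd G Z).ncard + (s.biUnion t).card := by
      refine le_trans (Set.ncard_le_ncard hsub (Set.toFinite _)) ?_
      refine le_trans (Set.ncard_union_le _ _) ?_
      rw [Set.ncard_coe_finset]
      exact Nat.add_le_add_left (Finset.card_image_le) _
    have := hXcard ▸ hsurX
    omega
  obtain ⟨f, hfinj, hft⟩ :=
    (Finset.all_card_le_biUnion_card_iff_exists_injective t).mp hHall
  -- f lands in U and is adjacent
  have hfU : ∀ a, f a ∈ U := fun a => (Finset.mem_filter.mp (hft a)).1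
  have hfadj : ∀ a : {v : ↥R // y v < 1/2}, G.Adj ↑↑a ↑(f a) :=
    fun a => (Finset.mem_filter.mp (hft a)).2
  have hyU : ∀ u ∈ U, ¬ y u < 1/2 := fun u hu => (Finset.mem_filter.mp hu).2.1
  -- key sum inequality
  have hcover : ∀ a : {v : ↥R // y v < 1/2}, 1 ≤ y ↑a + y (f a) := by
    intro a
    apply hy.2
    simp only [SimpleGraph.induce, SimpleGraph.comap_adj]
    exact hfadj a
  have hkey : ∑ v ∈ B0, (1/2 - y v) ≤ ∑ u ∈ U, (y u - 1/2) := by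
    have e1 : ∑ v ∈ B0, ((1:ℝ)/2 - y v) = ∑ a : {v : ↥R // y v < 1/2}, (1/2 - y ↑a) :=
      Finset.sum_subtype B0 (fun v => by simp [hB0]) _
    have e2 : ∑ a : {v : ↥R // y v < 1/2}, ((1:ℝ)/2 - y ↑a)
        ≤ ∑ a : {v : ↥R // y v < 1/2}, (y (f a) - 1/2) := by
      refine Finset.sum_le_sum fun a _ => ?_
      have := hcover a
      linarith
    have e3 : ∑ a : {v : ↥R // y v < 1/2}, (y (f a) - (1:ℝ)/2)
        = ∑ u ∈ Finset.univ.image f, (y u - 1/2) := by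
      rw [Finset.sum_image (fun a _ b _ hab => hfinj hab)]
    have e4 : ∑ u ∈ Finset.univ.image f, (y u - (1:ℝ)/2) ≤ ∑ u ∈ U, (y u - 1/2) := by
      refine Finset.sum_le_sum_of_subset_of_nonneg ?_ ?_
      · intro u hu
        obtain ⟨a, _, rfl⟩ := Finset.mem_image.mp hu
        exact hfU a
      · intro u hu _
        have := hyU u hu
        linarith [not_lt.mp this]
    calc ∑ v ∈ B0, ((1:ℝ)/2 - y v) = _ := e1
      _ ≤ _ := e2
      _ = _ := e3
      _ ≤ _ := e4
  -- the weight over R is at most the weight of y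
  have hsumR : ∑ v : ↥R, (if bad v then (1:ℝ)/2 else y v) ≤ fvcWeight y := by
    rw [fvcWeight, ← sub_nonpos, ← Finset.sum_sub_distrib]
    have hzero : ∀ v ∈ Finset.univ, v ∉ B0 ∪ U →
        ((if bad v then (1:ℝ)/2 else y v) - y v) = 0 := by
      intro v _ hv
      rw [Finset.mem_union] at hv
      push_neg at hv
      have h1 : ¬ y v < 1/2 := fun hc =>
        hv.1 (by rw [hB0]; exact Finset.mem_filter.mpr ⟨Finset.mem_univ _, hc⟩)
      have h2 : ¬ ∃ u : ↥R, G.Adj ↑v ↑u ∧ y u < 1/2 := fun hc =>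
        hv.2 (by rw [hU]; exact Finset.mem_filter.mpr ⟨Finset.mem_univ _, h1, hc⟩)
      have hnb : ¬ bad v := fun hb => hb.elim h1 h2
      rw [if_neg hnb, sub_self]
    rw [← Finset.sum_subset (Finset.subset_univ (B0 ∪ U)) hzero]
    have hdisjBU : Disjoint B0 U := by
      rw [Finset.disjoint_left]
      intro v hvB hvU
      exact (Finset.mem_filter.mp hvU).2.1 (Finset.mem_filter.mp hvB).2
    rw [Finset.sum_union hdisjBU]
    have hB : ∀ v ∈ B0, ((if bad v then (1:ℝ)/2 else y v) - y v) = 1/2 - y v := by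
      intro v hv
      rw [if_pos (Or.inl (Finset.mem_filter.mp hv).2)]
    have hUU : ∀ v ∈ U, ((if bad v then (1:ℝ)/2 else y v) - y v) = 1/2 - y v := by
      intro v hv
      rw [if_pos (Or.inr (Finset.mem_filter.mp hv).2.2)]
    rw [Finset.sum_congr rfl hB, Finset.sum_congr rfl hUU]
    have : ∑ v ∈ U, ((1:ℝ)/2 - y v) = - ∑ u ∈ U, (y u - 1/2) := by
      rw [← Finset.sum_neg_distrib]
      exact Finset.sum_congr rfl fun v _ => by ring
    rw [this]
    linarith [hkey]
  -- conclude
  have h2 : fvcWeight x ≤ ((nbhd G Z).ncard : ℝ) - 1/2 + fvcWeight y := by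
    rw [hsplit, hScardR]
    linarith [hsumR]
  linarith [h1, h2]
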